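/- Let r ≥ 1 be an integer, let β_j be the coefficient of q^j in P_r, and let α_i be the coefficient of q^i in [r+1]·[r]. Then for every integer j with 2r+1 ≤ j ≤ 3r+1: β_j = ∑_{i=j-r-2}^{2r-1} α_i + 2∑_{i=j-r-1}^{2r-1} α_i + 2∑_{i=j-r}^{2r-1} α_i. -/

import Mathlib

open Polynomial Finset

/-- The q-integer `[n] = 1 + q + ... + q^(n-1)` in `ℤ[q]`. -/
noncomputable def qint (n : ℕ) : Polynomial ℤ := ∑ i ∈ Finset.range n, X ^ i

/-- The Poincaré polynomial `P_r` of the moduli space of two-pointed, genus-zero,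
degree-two stable maps to `ℙ^r`. -/
noncomputable def P (r : ℕ) : Polynomial ℤ :=
  (∑ i ∈ Finset.range (r + 1), (X : Polynomial ℤ) ^ i) *
    (∑ i ∈ Finset.range r, (X : Polynomial ℤ) ^ i) *
    ((∑ i ∈ Finset.range (r + 3), (X : Polynomial ℤ) ^ i) +
      2 * ∑ i ∈ Finset.Icc 1 (r + 1), (X : Polynomial ℤ) ^ i +
      2 * ∑ i ∈ Finset.Icc 2 r, (X : Polynomial ℤ) ^ i)

lemma qint_natDegree_le (n : ℕ) : (qint n).natDegree ≤ n - 1 := by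
  unfold qint
  refine Polynomial.natDegree_sum_le_of_forall_le _ _ fun i hi => ?_
  simp only [Polynomial.natDegree_X_pow]
  exact Nat.le_sub_one_of_lt (Finset.mem_range.mp hi)

lemma coeff_mul_sum_pow (F : Polynomial ℤ) (a b j : ℕ) (ha : a ≤ j) (hb : b ≤ j) :
    (F * ∑ i ∈ Finset.Icc a b, X ^ i).coeff j = ∑ i ∈ Finset.Icc (j - b) (j - a), F.coeff i := by
  rw [Finset.mul_sum, Polynomial.finset_sum_coeff]
  have h1 : ∀ i ∈ Finset.Icc a b, (F * X ^ i).coeff j = F.coeff (j - i) := by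
    intro i hi
    rw [Polynomial.coeff_mul_X_pow']
    simp [le_trans (Finset.mem_Icc.mp hi).2 hb]
  rw [Finset.sum_congr rfl h1]
  refine Finset.sum_nbij' (fun i => j - i) (fun i => j - i) ?_ ?_ ?_ ?_ ?_
  · intro i hi; simp only [Finset.mem_Icc] at hi ⊢; omega
  · intro i hi; simp only [Finset.mem_Icc] at hi ⊢; omega
  · intro i hi; simp only [Finset.mem_Icc] at hi; show j - (j - i) = i; omega
  · intro i hi; simp only [Finset.mem_Icc] at hi; show j - (j - i) = i; omega
  · intro i hi; rfl

lemma sum_trunc (F : Polynomial ℤ) (c d m : ℕ) (hdm : d ≤ m)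
    (hF : ∀ i, d < i → F.coeff i = 0) :
    ∑ i ∈ Finset.Icc c m, F.coeff i = ∑ i ∈ Finset.Icc c d, F.coeff i := by
  refine (Finset.sum_subset (Finset.Icc_subset_Icc_right hdm) ?_).symm
  intro i hi hni
  refine hF i ?_
  simp only [Finset.mem_Icc] at hi hni
  omega

/-- Formula for the Betti numbers `β_j` of `\overline{M}_{0,2}(ℙ^r, 2)` for `2r+1 ≤ j ≤ 3r+1`. -/
theorem betti_high (r j : ℕ) (hr : 1 ≤ r) (hj1 : 2 * r + 1 ≤ j) (hj2 : j ≤ 3 * r + 1) :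
    (P r).coeff j =
      (∑ i ∈ Finset.Icc (j - r - 2) (2 * r - 1), (qint (r + 1) * qint r).coeff i) +
      2 * (∑ i ∈ Finset.Icc (j - r - 1) (2 * r - 1), (qint (r + 1) * qint r).coeff i) +
      2 * (∑ i ∈ Finset.Icc (j - r) (2 * r - 1), (qint (r + 1) * qint r).coeff i) := by
  set F := qint (r + 1) * qint r with hF
  have hFdeg : ∀ i, 2 * r - 1 < i → F.coeff i = 0 := by
    intro i hi
    apply Polynomial.coeff_eq_zero_of_natDegree_lt
    calc F.natDegree ≤ (qint (r+1)).natDegree + (qint r).natDegree :=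
          Polynomial.natDegree_mul_le
      _ ≤ r + (r - 1) := add_le_add (qint_natDegree_le (r+1)) (qint_natDegree_le r)
      _ < i := by omega
  have hrange : (∑ i ∈ Finset.range (r + 3), (X : Polynomial ℤ) ^ i)
      = ∑ i ∈ Finset.Icc 0 (r + 2), (X : Polynomial ℤ) ^ i := by
    rw [Finset.range_eq_Ico, show r + 3 = r + 2 + 1 from rfl, Finset.Ico_add_one_right_eq_Icc]
  have hP : P r = F * ((∑ i ∈ Finset.Icc 0 (r + 2), (X : Polynomial ℤ) ^ i) +
      2 * ∑ i ∈ Finset.Icc 1 (r + 1), (X : Polynomial ℤ) ^ i +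
      2 * ∑ i ∈ Finset.Icc 2 r, (X : Polynomial ℤ) ^ i) := by
    rw [hF, P, qint, qint, hrange]
  rw [hP, mul_add, mul_add, mul_left_comm F 2, mul_left_comm F 2,
    Polynomial.coeff_add, Polynomial.coeff_add,
    Polynomial.coeff_ofNat_mul, Polynomial.coeff_ofNat_mul]
  rw [coeff_mul_sum_pow F 0 (r+2) j (by omega) (by omega),
    coeff_mul_sum_pow F 1 (r+1) j (by omega) (by omega),
    coeff_mul_sum_pow F 2 r j (by omega) (by omega)]
  rw [sum_trunc F (j - (r+2)) (2*r-1) (j - 0) (by omega) hFdeg,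
    sum_trunc F (j - (r+1)) (2*r-1) (j - 1) (by omega) hFdeg,
    sum_trunc F (j - r) (2*r-1) (j - 2) (by omega) hFdeg]
  have e1 : j - (r + 2) = j - r - 2 := by omega
  have e2 : j - (r + 1) = j - r - 1 := by omega
  rw [e1, e2]
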